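/- For the Gavrilov flow u = (1/ρ)·((∂p/∂z)·e_ρ − (∂p/∂ρ)·e_z + b·e_φ) with p = aR⁴/4, b = (R³/4)√(H(a)), a = α(ρ/R, z/R), one has |u|² = 3p everywhere in its domain; consequently the Bernoulli function B = p + |u|²/2 equals (5/2)p and is a function of the pressure. -/

import Mathlib

/-- `ψ` is an analytic solution near `0` of the singular Cauchy problem
`3x ψ'' + 6x (ψ')³ − 4ψ (ψ')² − 3ψ' = 0`, `ψ(0) = 1`, `ψ'(0) = −3/4`. -/
def GavrilovODE (ψ : ℝ → ℝ) : Prop :=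
  AnalyticAt ℝ ψ 0 ∧ ψ 0 = 1 ∧ deriv ψ 0 = -(3/4) ∧
    ∀ᶠ x in nhds (0:ℝ),
      3 * x * deriv (deriv ψ) x + 6 * x * (deriv ψ x)^3
        - 4 * ψ x * (deriv ψ x)^2 - 3 * deriv ψ x = 0

/-- `α` is an analytic solution near `(1,0)` of the system
`∂α/∂x = F(x,α)`, `(∂α/∂y)² = G(x,α)` with `α(1,0) = 0` and `∂α/∂y` not
identically zero. -/
def SolvesSystem (F G : ℝ → ℝ → ℝ) (α : ℝ → ℝ → ℝ) : Prop :=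
  AnalyticAt ℝ (fun q : ℝ × ℝ => α q.1 q.2) (1, 0) ∧
  α 1 0 = 0 ∧
  (¬ ∀ᶠ q : ℝ × ℝ in nhds (1, 0), deriv (α q.1) q.2 = 0) ∧
  ∀ᶠ q : ℝ × ℝ in nhds (1, 0),
    deriv (fun x => α x q.2) q.1 = F q.1 (α q.1 q.2) ∧
    (deriv (α q.1) q.2)^2 = G q.1 (α q.1 q.2)


/-- For the Gavrilov flow, `|u|² = 3p`, and hence the Bernoulli function
`B = p + |u|²/2 = (5/2)p` is a function of the pressure. -/
theorem gavrilov_flow_bernoulli (ψ : ℝ → ℝ) (h : GavrilovODE ψ)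
    (F : ℝ → ℝ → ℝ) (hF : ∀ x α, F x α = -2*x*ψ α + 2*x^3)
    (H : ℝ → ℝ) (hH : ∀ α, H α = 6*α*(1/deriv ψ α + 2*ψ α))
    (G : ℝ → ℝ → ℝ) (hG : ∀ x α, G x α = 12*x^2*α - (F x α)^2 - H α)
    (α : ℝ → ℝ → ℝ) (hα : SolvesSystem F G α)
    (R : ℝ) (hR : 0 < R)
    (a p b uρ uφ uz : ℝ → ℝ → ℝ)
    (ha : ∀ ρ z, a ρ z = α (ρ/R) (z/R))
    (hp : ∀ ρ z, p ρ z = a ρ z * R^4 / 4)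
    (hb : ∀ ρ z, b ρ z = R^3 / 4 * Real.sqrt (H (a ρ z)))
    (huρ : ∀ ρ z, uρ ρ z = (1/ρ) * deriv (p ρ) z)
    (huφ : ∀ ρ z, uφ ρ z = (1/ρ) * b ρ z)
    (huz : ∀ ρ z, uz ρ z = -(1/ρ) * deriv (fun ρ' => p ρ' z) ρ) :
    ∀ᶠ q : ℝ × ℝ in nhds (R, 0),
      (uρ q.1 q.2)^2 + (uφ q.1 q.2)^2 + (uz q.1 q.2)^2 = 3 * p q.1 q.2 ∧
      p q.1 q.2 + ((uρ q.1 q.2)^2 + (uφ q.1 q.2)^2 + (uz q.1 q.2)^2) / 2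
        = 5/2 * p q.1 q.2 := by
  classical
  obtain ⟨hψa, hψ0, hψ'0, -⟩ := h
  obtain ⟨hαa, hα0, -, hsys⟩ := hα
  have hRne : R ≠ 0 := hR.ne'
  -- the auxiliary function c with H t = t * c t
  set cc : ℝ → ℝ := fun t => 6 * ((deriv ψ t)⁻¹ + 2 * ψ t) with hcc
  have hHc : ∀ t, H t = t * cc t := by
    intro t; rw [hH, hcc]; simp only [one_div]; ring
  -- continuity facts for ψ
  have hdc : ContinuousAt (deriv ψ) 0 := by
    have hfd : ContinuousAt (fun t => fderiv ℝ ψ t 1) 0 :=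
      ((ContinuousLinearMap.apply ℝ ℝ (1:ℝ)).continuous.continuousAt).comp
        hψa.fderiv.continuousAt
    simpa [fderiv_apply_one_eq_deriv] using hfd
  have hψc : ContinuousAt ψ 0 := hψa.continuousAt
  have hccont : ContinuousAt cc 0 := by
    apply continuousAt_const.mul
    exact (hdc.inv₀ (by rw [hψ'0]; norm_num)).add (continuousAt_const.mul hψc)
  have hcc0 : cc 0 = 4 := by rw [hcc]; simp only []; rw [hψ'0, hψ0]; norm_num
  have hccEv : ∀ᶠ t in nhds (0:ℝ), 3 < cc t ∧ cc t < 5 := by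
    have h35 : Set.Ioo (3:ℝ) 5 ∈ nhds (cc 0) := by
      rw [hcc0]; exact Ioo_mem_nhds (by norm_num) (by norm_num)
    filter_upwards [hccont h35] with t ht
    exact ⟨ht.1, ht.2⟩
  -- eventual facts near (1,0)
  have htend : Filter.Tendsto (fun q : ℝ × ℝ => α q.1 q.2)
      (nhds ((1:ℝ),(0:ℝ))) (nhds 0) := by
    have := hαa.continuousAt
    rwa [ContinuousAt, hα0] at this
  have h1 : ∀ᶠ q : ℝ × ℝ in nhds ((1:ℝ),(0:ℝ)),
      DifferentiableAt ℝ (fun q : ℝ × ℝ => α q.1 q.2) q :=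
    hαa.eventually_analyticAt.mono fun q hq => hq.differentiableAt
  have h3 : ∀ᶠ q : ℝ × ℝ in nhds ((1:ℝ),(0:ℝ)),
      3 < cc (α q.1 q.2) ∧ cc (α q.1 q.2) < 5 := htend.eventually hccEv
  have h4 : ∀ᶠ q : ℝ × ℝ in nhds ((1:ℝ),(0:ℝ)), 9/10 < q.1 ∧ q.1 < 11/10 := by
    have hf : ContinuousAt (Prod.fst : ℝ × ℝ → ℝ) ((1:ℝ),(0:ℝ)) :=
      continuous_fst.continuousAt
    have hm : Set.Ioo (9/10:ℝ) (11/10) ∈ nhds ((1:ℝ),(0:ℝ)).1 :=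
      Ioo_mem_nhds (by norm_num) (by norm_num)
    filter_upwards [hf hm] with q hq
    exact ⟨hq.1, hq.2⟩
  have hEv := (h1.and (hsys.and (h3.and h4)))
  -- map (ρ,z) ↦ (ρ/R, z/R)
  have hmap : Filter.Tendsto (fun q : ℝ × ℝ => (q.1/R, q.2/R))
      (nhds ((R:ℝ),(0:ℝ))) (nhds ((1:ℝ),(0:ℝ))) := by
    have hct : ContinuousAt (fun q : ℝ × ℝ => (q.1/R, q.2/R)) ((R:ℝ),(0:ℝ)) := by
      fun_prop
    have hval : ((R/R : ℝ), ((0:ℝ)/R)) = ((1:ℝ),(0:ℝ)) := by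
      rw [div_self hRne]; norm_num
    rw [ContinuousAt] at hct
    simpa [div_self hRne] using hct
  have hPull := hmap.eventually hEv
  have hρpos : ∀ᶠ q : ℝ × ℝ in nhds ((R:ℝ),(0:ℝ)), 0 < q.1 := by
    have hf : ContinuousAt (Prod.fst : ℝ × ℝ → ℝ) ((R:ℝ),(0:ℝ)) :=
      continuous_fst.continuousAt
    have hm : Set.Ioi (0:ℝ) ∈ nhds ((R:ℝ),(0:ℝ)).1 := Ioi_mem_nhds hR
    filter_upwards [hf hm] with q hq using hq
  filter_upwards [hPull, hρpos] with q hq hqpos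
  obtain ⟨ρ, z⟩ := q
  obtain ⟨hd, ⟨hDx, hDy2⟩, hcA, hx9, hx11⟩ := hq
  have hρne : ρ ≠ 0 := ne_of_gt hqpos
  set A := α (ρ/R) (z/R) with hA'
  set Dy := deriv (α (ρ/R)) (z/R) with hDy'
  set Dx := deriv (fun x => α x (z/R)) (ρ/R) with hDx'
  -- nonnegativity of A and H A
  have hG0 : (0:ℝ) ≤ 12*(ρ/R)^2*A - (F (ρ/R) A)^2 - H A := by
    rw [← hG, ← hDy2]; exact sq_nonneg _
  have hx2 : (81:ℝ)/100 < (ρ/R)^2 := by nlinarith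
  have hpos : (0:ℝ) < 12*(ρ/R)^2 - cc A := by nlinarith [hcA.2]
  have hAnn : (0:ℝ) ≤ A := by
    by_contra hA0
    push_neg at hA0
    rw [hHc A] at hG0
    nlinarith [sq_nonneg (F (ρ/R) A), mul_pos hpos (neg_pos.mpr hA0)]
  have hHA : (0:ℝ) ≤ H A := by
    rw [hHc A]
    exact mul_nonneg hAnn (le_trans (by norm_num) hcA.1.le)
  -- differentiability of the partial maps
  have hdy : DifferentiableAt ℝ (α (ρ/R)) (z/R) := by
    have := hd.comp (z/R)
      ((differentiableAt_const (ρ/R)).prodMk differentiableAt_id)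
    exact this
  have hdx : DifferentiableAt ℝ (fun x => α x (z/R)) (ρ/R) := by
    have := hd.comp (ρ/R)
      (differentiableAt_id.prodMk (differentiableAt_const (z/R)) : DifferentiableAt ℝ (fun x : ℝ => (id x, z/R)) (ρ/R))
    exact this
  -- derivative computations
  have hdivz : HasDerivAt (fun z' : ℝ => z'/R) (1/R) z := by
    simpa using (hasDerivAt_id z).div_const R
  have hdivρ : HasDerivAt (fun ρ' : ℝ => ρ'/R) (1/R) ρ := by
    simpa using (hasDerivAt_id ρ).div_const R
  have hcz : HasDerivAt (fun z' => α (ρ/R) (z'/R)) (Dy * (1/R)) z :=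
    HasDerivAt.comp z hdy.hasDerivAt hdivz
  have hcρ : HasDerivAt (fun ρ' => α (ρ'/R) (z/R)) (Dx * (1/R)) ρ :=
    by have := HasDerivAt.comp ρ hdx.hasDerivAt hdivρ; exact this
  have e1 : deriv (p ρ) z = R^4/4 * (Dy * (1/R)) := by
    have hfe : p ρ = fun z' => R^4/4 * α (ρ/R) (z'/R) := by
      funext z'; rw [hp, ha]; ring
    rw [hfe]
    exact (hcz.const_mul (R^4/4)).deriv
  have e2 : deriv (fun ρ' => p ρ' z) ρ = R^4/4 * (Dx * (1/R)) := by
    have hfe : (fun ρ' => p ρ' z) = fun ρ' => R^4/4 * α (ρ'/R) (z/R) := by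
      funext ρ'; rw [hp, ha]; ring
    rw [hfe]
    exact (hcρ.const_mul (R^4/4)).deriv
  -- the key algebraic identity
  have hHAeq : H A = 12*(ρ/R)^2*A - Dx^2 - Dy^2 := by
    have := hG (ρ/R) A
    rw [← hDy2, ← hDx] at this
    linarith
  have main : (uρ ρ z)^2 + (uφ ρ z)^2 + (uz ρ z)^2 = 3 * p ρ z := by
    rw [huρ, huφ, huz, hb, e1, e2, hp, ha]
    have hexp : (1/ρ * (R^3/4 * Real.sqrt (H A)))^2
        = (1/ρ)^2 * (R^3/4)^2 * H A := by
      rw [mul_pow, mul_pow, Real.sq_sqrt hHA]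
      ring
    rw [← hA', hexp, hHAeq]
    field_simp
    ring
  refine ⟨main, ?_⟩
  rw [main]
  ring
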